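/- Let G be a compact, Hausdorff, second countable abelian topological group, 𝓗 a complex separable Hilbert space with orthonormal basis (e_π)_{π∈Σ} indexed by a subset Σ ⊆ Ĝ, and U the unitary representation of G on 𝓗 with U(g) e_π = π(g) e_π. Let v be a unit vector in a complex Hilbert space 𝒦, let (c_π)_{π∈Σ} be complex numbers with |c_π| = 1, set v_π = c_π v, and let E be the U-covariant POVM on G determined by ⟨e_ρ, E(X) e_π⟩ = ⟨v_ρ, v_π⟩ ∫_X \overline{π(g)} ρ(g) dμ_G(g). Then E is an extreme point of the convex set of all U-covariant POVMs on G. -/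

import Mathlib

open MeasureTheory
open scoped Pointwise ENNReal ComplexInnerProductSpace

noncomputable section

structure POVM (Ω : Type*) [MeasurableSpace Ω] (𝓗 : Type*) [NormedAddCommGroup 𝓗]
    [InnerProductSpace ℂ 𝓗] [CompleteSpace 𝓗] where
  toFun : Set Ω → (𝓗 →L[ℂ] 𝓗)
  isPositive' : ∀ X : Set Ω, MeasurableSet X → (toFun X).IsPositive
  le_one' : ∀ X : Set Ω, MeasurableSet X → (1 - toFun X).IsPositive
  normalized' : toFun Set.univ = 1
  not_measurable' : ∀ X : Set Ω, ¬ MeasurableSet X → toFun X = 0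
  m_iUnion' : ∀ X : ℕ → Set Ω, (∀ n, MeasurableSet (X n)) →
    Pairwise (Function.onFun Disjoint X) → ∀ φ ψ : 𝓗,
      HasSum (fun n => ⟪φ, toFun (X n) ψ⟫) ⟪φ, toFun (⋃ n, X n) ψ⟫

def POVM.Covariant {G : Type*} [Group G] {Ω : Type*} [MeasurableSpace Ω] [MulAction G Ω]
    {𝓗 : Type*} [NormedAddCommGroup 𝓗] [InnerProductSpace ℂ 𝓗] [CompleteSpace 𝓗]
    (U : G → 𝓗 ≃ₗᵢ[ℂ] 𝓗) (E : POVM Ω 𝓗) : Prop :=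
  ∀ (g : G) (X : Set Ω), MeasurableSet X → ∀ φ ψ : 𝓗,
    ⟪φ, E.toFun (g • X) ψ⟫ = ⟪(U g).symm φ, E.toFun X ((U g).symm ψ)⟫

def POVM.IsExtremeCovariant {G : Type*} [Group G] {Ω : Type*} [MeasurableSpace Ω]
    [MulAction G Ω] {𝓗 : Type*} [NormedAddCommGroup 𝓗] [InnerProductSpace ℂ 𝓗]
    [CompleteSpace 𝓗] (U : G → 𝓗 ≃ₗᵢ[ℂ] 𝓗) (E : POVM Ω 𝓗) : Prop :=
  ∀ E₁ E₂ : POVM Ω 𝓗, E₁.Covariant U → E₂.Covariant U →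
    ∀ t : ℝ, 0 < t → t < 1 →
      (∀ X : Set Ω, E.toFun X = (t : ℂ) • E₁.toFun X + ((1 - t : ℝ) : ℂ) • E₂.toFun X) →
      E₁ = E ∧ E₂ = E

section Helpers

theorem pos_cs {𝓗 : Type*} [NormedAddCommGroup 𝓗] [InnerProductSpace ℂ 𝓗]
    [CompleteSpace 𝓗] (A : 𝓗 →L[ℂ] 𝓗) (hA : A.IsPositive) (x y : 𝓗) :
    ‖⟪x, A y⟫‖ ^ 2 ≤ (⟪x, A x⟫).re * (⟪y, A y⟫).re := by
  have hsymm : ∀ a b : 𝓗, (starRingEnd ℂ) ⟪b, A a⟫ = ⟪a, A b⟫ := by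
    intro a b
    rw [inner_conj_symm]
    exact hA.isSelfAdjoint.isSymmetric a b
  let c : PreInnerProductSpace.Core ℂ 𝓗 :=
  { inner := fun a b => ⟪a, A b⟫
    conj_inner_symm := hsymm
    re_inner_nonneg := fun a => hA.re_inner_nonneg_right a
    add_left := fun a b z => by simp [inner_add_left]
    smul_left := fun a b r => by simp [inner_smul_left]; ring }
  have h := @InnerProductSpace.Core.inner_mul_inner_self_le ℂ 𝓗 _ _ _ c x y
  have h2 : ‖⟪x, A y⟫‖ = ‖⟪y, A x⟫‖ := by
    rw [← hsymm y x]; exact (RCLike.norm_conj _).symm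
  calc ‖⟪x, A y⟫‖ ^ 2 = ‖⟪x, A y⟫‖ * ‖⟪y, A x⟫‖ := by rw [sq, h2]
    _ ≤ (⟪x, A x⟫).re * (⟪y, A y⟫).re := h

theorem disc_extreme {t s : ℝ} (ht : 0 < t) (hs : 0 < s) (hts : t + s = 1)
    {a b u : ℂ} (ha : ‖a‖ ≤ 1) (hb : ‖b‖ ≤ 1) (hu : ‖u‖ = 1)
    (h : (t:ℂ) * a + (s:ℂ) * b = u) : a = u ∧ b = u := by
  have hA : a.re^2 + a.im^2 ≤ 1 := by
    have h1 : ‖a‖ ≤ 1 := ha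
    nlinarith [Complex.sq_norm a, Complex.normSq_apply a, norm_nonneg a]
  have hB : b.re^2 + b.im^2 ≤ 1 := by
    have h1 : ‖b‖ ≤ 1 := hb
    nlinarith [Complex.sq_norm b, Complex.normSq_apply b, norm_nonneg b]
  have hU : u.re^2 + u.im^2 = 1 := by
    have h1 : ‖u‖ = 1 := hu
    nlinarith [Complex.sq_norm u, Complex.normSq_apply u]
  have hre : t * a.re + s * b.re = u.re := by
    have := congrArg Complex.re h; simpa using this
  have him : t * a.im + s * b.im = u.im := by
    have := congrArg Complex.im h; simpa using this
  have hre2 : (t * a.re + s * b.re)^2 = u.re^2 := by rw [hre]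
  have him2 : (t * a.im + s * b.im)^2 = u.im^2 := by rw [him]
  have key : (a.re - b.re)^2 + (a.im - b.im)^2 ≤ 0 := by
    nlinarith [mul_le_mul_of_nonneg_left hA ht.le, mul_le_mul_of_nonneg_left hB hs.le,
      mul_pos ht hs, hre2, him2, hU]
  have k1 : (a.re - b.re)^2 = 0 :=
    le_antisymm (by linarith [sq_nonneg (a.im - b.im)]) (sq_nonneg _)
  have k2 : (a.im - b.im)^2 = 0 :=
    le_antisymm (by linarith [sq_nonneg (a.re - b.re)]) (sq_nonneg _)
  have h1 : a.re = b.re := by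
    have := pow_eq_zero_iff (n := 2) (by norm_num) |>.mp k1; linarith
  have h2 : a.im = b.im := by
    have := pow_eq_zero_iff (n := 2) (by norm_num) |>.mp k2; linarith
  have hab : a = b := Complex.ext h1 h2
  have hau : a = u := by
    rw [hab] at h ⊢
    rw [← h, ← add_mul]
    norm_cast; rw [hts]; simp
  exact ⟨hau, hab ▸ hau⟩

theorem build_measure {α : Type*} [MeasurableSpace α] (m : Set α → ℝ)
    (h0 : m ∅ = 0) (hnn : ∀ X, MeasurableSet X → 0 ≤ m X)
    (hadd : ∀ X : ℕ → Set α, (∀ n, MeasurableSet (X n)) → Pairwise (Function.onFun Disjoint X) →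
      HasSum (fun n => m (X n)) (m (⋃ n, X n))) :
    ∃ ν : Measure α, ∀ X, MeasurableSet X → ν X = ENNReal.ofReal (m X) := by
  refine ⟨Measure.ofMeasurable (fun X _ => ENNReal.ofReal (m X)) (by simp [h0]) ?_,
    fun X hX => Measure.ofMeasurable_apply X hX⟩
  intro f hf hd
  have hs := hadd f hf hd
  show ENNReal.ofReal (m (⋃ i, f i)) = ∑' i, ENNReal.ofReal (m (f i))
  rw [← hs.tsum_eq, ENNReal.ofReal_tsum_of_nonneg (fun n => hnn _ (hf n)) hs.summable]

variable {Ω : Type*} [MeasurableSpace Ω] {𝓗 : Type*} [NormedAddCommGroup 𝓗]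
    [InnerProductSpace ℂ 𝓗] [CompleteSpace 𝓗]

omit [CompleteSpace 𝓗] in
theorem clm_ext_inner {A B : 𝓗 →L[ℂ] 𝓗} (h : ∀ φ ψ : 𝓗, ⟪φ, A ψ⟫ = ⟪φ, B ψ⟫) : A = B :=
  ContinuousLinearMap.ext fun ψ => ext_inner_left ℂ fun φ => h φ ψ

theorem POVM.empty (F : POVM Ω 𝓗) : F.toFun ∅ = 0 := by
  apply clm_ext_inner
  intro φ ψ
  have h := F.m_iUnion' (fun _ => ∅) (fun _ => MeasurableSet.empty)
    (fun a b hab => by simp [Function.onFun]) φ ψ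
  rw [Set.iUnion_empty] at h
  have : Summable (fun _ : ℕ => ⟪φ, F.toFun ∅ ψ⟫) := h.summable
  rw [summable_const_iff] at this
  simp [this]

theorem POVM.ext' {F₁ F₂ : POVM Ω 𝓗} (h : ∀ X, F₁.toFun X = F₂.toFun X) : F₁ = F₂ := by
  cases F₁; cases F₂
  congr 1
  exact funext h

omit [CompleteSpace 𝓗] in
theorem clm_ext_basis {ι : Type*} (e : HilbertBasis ι ℂ 𝓗) {A B : 𝓗 →L[ℂ] 𝓗}
    (h : ∀ i j : ι, ⟪e j, A (e i)⟫ = ⟪e j, B (e i)⟫) : A = B := by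
  have hv : ∀ i, A (e i) = B (e i) := by
    intro i
    apply e.repr.injective
    ext j
    rw [e.repr_apply_apply, e.repr_apply_apply]
    exact h i j
  have hd : Dense (Submodule.span ℂ (Set.range (e : ι → 𝓗)) : Set 𝓗) := by
    rw [dense_iff_closure_eq, ← Submodule.topologicalClosure_coe, e.dense_span]
    rfl
  exact ContinuousLinearMap.ext_on hd (fun x hx => by
    obtain ⟨i, rfl⟩ := hx; exact hv i)

theorem norm_le_one_of_rat (z : ℂ)
    (h : ∀ q r : ℚ, ((starRingEnd ℂ) ((q:ℂ) + (r:ℂ) * Complex.I) * z).re ≤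
      ‖(q:ℂ) + (r:ℂ) * Complex.I‖) : ‖z‖ ≤ 1 := by
  have key : ‖z‖^2 ≤ ‖z‖ := by
    refine le_of_forall_pos_le_add fun ε hε => ?_
    set δ := ε / (2 * (1 + ‖z‖)) with hδdef
    have hδ : 0 < δ := by positivity
    obtain ⟨q, hq⟩ := exists_rat_near z.re hδ
    obtain ⟨r, hr⟩ := exists_rat_near z.im hδ
    set lam : ℂ := (q:ℂ) + (r:ℂ) * Complex.I with hlam
    have hd : ‖lam - z‖ ≤ 2 * δ := by
      have h1 : (lam - z).re = (q:ℝ) - z.re := by simp [hlam]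
      have h2 : (lam - z).im = (r:ℝ) - z.im := by simp [hlam]
      have := Complex.norm_le_abs_re_add_abs_im (lam - z)
      rw [h1, h2] at this
      have e1 : |(q:ℝ) - z.re| < δ := by rw [abs_sub_comm]; exact hq
      have e2 : |(r:ℝ) - z.im| < δ := by rw [abs_sub_comm]; exact hr
      calc ‖lam - z‖ ≤ |(q:ℝ) - z.re| + |(r:ℝ) - z.im| := this
        _ ≤ 2 * δ := by linarith
    have h1 : ((starRingEnd ℂ) lam * z).re ≤ ‖lam‖ := h q r
    have h2 : ‖z‖^2 - ((starRingEnd ℂ) lam * z).re ≤ 2 * δ * ‖z‖ := by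
      have hzz : ‖z‖^2 = ((starRingEnd ℂ) z * z).re := by
        rw [mul_comm, Complex.mul_conj]
        have : ‖z‖^2 = Complex.normSq z := by rw [Complex.sq_norm]
        rw [this]; simp
      rw [hzz]
      have : ((starRingEnd ℂ) z * z).re - ((starRingEnd ℂ) lam * z).re
          = (((starRingEnd ℂ) z - (starRingEnd ℂ) lam) * z).re := by
        rw [sub_mul]; simp
      rw [this]
      calc (((starRingEnd ℂ) z - (starRingEnd ℂ) lam) * z).re
          ≤ ‖((starRingEnd ℂ) z - (starRingEnd ℂ) lam) * z‖ := Complex.re_le_norm _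
        _ = ‖(starRingEnd ℂ) (z - lam)‖ * ‖z‖ := by rw [map_sub, norm_mul]
        _ = ‖z - lam‖ * ‖z‖ := by rw [RCLike.norm_conj]
        _ = ‖lam - z‖ * ‖z‖ := by rw [norm_sub_rev]
        _ ≤ 2 * δ * ‖z‖ := by
            exact mul_le_mul_of_nonneg_right hd (norm_nonneg z)
    have h3 : ‖lam‖ ≤ ‖z‖ + 2 * δ := by
      calc ‖lam‖ = ‖z + (lam - z)‖ := by ring_nf
        _ ≤ ‖z‖ + ‖lam - z‖ := norm_add_le _ _
        _ ≤ ‖z‖ + 2 * δ := by linarith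
    have hδε : 2 * δ * (1 + ‖z‖) ≤ ε := by
      have hc : δ * (2 * (1 + ‖z‖)) = ε := div_mul_cancel₀ _ (by positivity)
      nlinarith [hc]
    nlinarith [norm_nonneg z]
  nlinarith [norm_nonneg z, sq_nonneg (‖z‖ - 1)]

end Helpers

set_option linter.unusedSectionVars false in
theorem dens_real {G : Type*} [MeasurableSpace G] (μG : Measure G) [IsFiniteMeasure μG]
    (ν : Set G → ℝ) (h0 : ν ∅ = 0)
    (hb : ∀ X, MeasurableSet X → |ν X| ≤ (μG X).toReal)
    (hadd : ∀ X : ℕ → Set G, (∀ n, MeasurableSet (X n)) → Pairwise (Function.onFun Disjoint X) →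
      HasSum (fun n => ν (X n)) (ν (⋃ n, X n))) :
    ∃ f : G → ℝ, Integrable f μG ∧ ∀ X, MeasurableSet X → ν X = ∫ x in X, f x ∂μG := by
  set m : Set G → ℝ := fun X => (μG X).toReal + ν X with hm
  have hnn : ∀ X, MeasurableSet X → 0 ≤ m X := by
    intro X hX
    have := abs_le.mp (hb X hX)
    simp only [hm]
    linarith [this.1]
  have haddm : ∀ X : ℕ → Set G, (∀ n, MeasurableSet (X n)) → Pairwise (Function.onFun Disjoint X) →
      HasSum (fun n => m (X n)) (m (⋃ n, X n)) := by
    intro X hmeas hd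
    have h1 : ∑' n, μG (X n) = μG (⋃ n, X n) := (measure_iUnion hd hmeas).symm
    have h2 : HasSum (fun n => (μG (X n)).toReal) ((μG (⋃ n, X n)).toReal) := by
      have hne : ∀ n, μG (X n) ≠ ∞ := fun n => measure_ne_top μG _
      have h5 := ENNReal.hasSum_toReal (f := fun n => μG (X n)) (by rw [h1]; exact measure_ne_top μG _)
      rwa [← ENNReal.tsum_toReal_eq hne, h1] at h5
    exact h2.add (hadd X hmeas hd)
  obtain ⟨Q, hQ⟩ := build_measure m (by simp [hm, h0]) hnn haddm
  haveI : IsFiniteMeasure Q := ⟨by rw [hQ _ MeasurableSet.univ]; exact ENNReal.ofReal_lt_top⟩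
  have hac : Q ≪ μG := by
    refine Measure.AbsolutelyContinuous.mk fun s hs h0s => ?_
    have hb' := hb s hs
    rw [h0s] at hb'
    simp only [ENNReal.toReal_zero] at hb'
    have hν : ν s = 0 := abs_eq_zero.mp (le_antisymm hb' (abs_nonneg _))
    rw [hQ s hs]
    simp [hm, h0s, hν]
  set f0 : G → ℝ := fun x => (Q.rnDeriv μG x).toReal with hf0
  have hint : Integrable f0 μG := Measure.integrable_toReal_rnDeriv
  have hset : ∀ X : Set G, MeasurableSet X → ∫ x in X, f0 x ∂μG = (Q X).toReal := by
    intro X hX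
    exact Measure.setIntegral_toReal_rnDeriv hac X
  refine ⟨fun x => f0 x - 1, hint.sub (integrable_const 1), fun X hX => ?_⟩
  have h2 : ∫ x in X, (f0 x - 1) ∂μG = (∫ x in X, f0 x ∂μG) - ∫ x in X, (1:ℝ) ∂μG :=
    integral_sub hint.integrableOn (integrable_const 1).integrableOn
  have h3 : ∫ x in X, (1:ℝ) ∂μG = (μG X).toReal := by simp; rfl
  have h4 : (Q X).toReal = m X := by rw [hQ X hX, ENNReal.toReal_ofReal (hnn X hX)]
  rw [h2, h3, hset X hX, h4, hm]
  ring



/-- (Compact abelian `G` acting on itself, multiplicity free case,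
rank one kernels.)  If `v_π = c_π v` with `v` a unit vector and `|c_π| = 1`, then the
associated covariant POVM is an extreme point of the convex set of `U`-covariant POVMs. -/
theorem extremal_covariant_povm_stmt12
    {G : Type*} [CommGroup G] [TopologicalSpace G] [IsTopologicalGroup G] [CompactSpace G]
    [T2Space G] [SecondCountableTopology G] [MeasurableSpace G] [BorelSpace G]
    (μG : Measure G) [μG.IsHaarMeasure] [IsProbabilityMeasure μG]
    {ι : Type*} [Countable ι]
    (χ : ι → G → ℂ)
    (hχ_cont : ∀ i, Continuous (χ i))
    (hχ_mul : ∀ i (g g' : G), χ i (g * g') = χ i g * χ i g')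
    (hχ_norm : ∀ i g, ‖χ i g‖ = 1)
    (hχ_inj : Function.Injective χ)
    {𝓗 : Type*} [NormedAddCommGroup 𝓗] [InnerProductSpace ℂ 𝓗] [CompleteSpace 𝓗]
    (e : HilbertBasis ι ℂ 𝓗)
    (U : G → 𝓗 ≃ₗᵢ[ℂ] 𝓗)
    (hU : ∀ (g : G) (i : ι), U g (e i) = χ i g • e i)
    {𝒦 : Type*} [NormedAddCommGroup 𝒦] [InnerProductSpace ℂ 𝒦] [CompleteSpace 𝒦]
    (vv : 𝒦) (hvv : ‖vv‖ = 1)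
    (c : ι → ℂ) (hc : ∀ i, ‖c i‖ = 1)
    (E : POVM G 𝓗) (hcov : E.Covariant U)
    (hE : ∀ (i j : ι) (X : Set G), MeasurableSet X →
      ⟪e j, E.toFun X (e i)⟫ =
        ⟪c j • vv, c i • vv⟫ * ∫ g in X, (starRingEnd ℂ) (χ i g) * χ j g ∂μG) :
    E.IsExtremeCovariant U := by
  intro E₁ E₂ hcov1 hcov2 t ht0 ht1 hsum
  -- basic facts about the characters
  have hχne : ∀ i g, χ i g ≠ 0 := by
    intro i g h
    have := hχ_norm i g
    rw [h] at this
    simp at this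
  have hconj : ∀ (z : ℂ), ‖z‖ = 1 → (starRingEnd ℂ) z * z = 1 := by
    intro z hz
    rw [mul_comm, Complex.mul_conj]
    have : Complex.normSq z = 1 := by
      rw [Complex.normSq_eq_norm_sq, hz]; norm_num
    rw [this]; simp
  have hUsymm : ∀ (g : G) (i : ι), (U g).symm (e i) = (starRingEnd ℂ) (χ i g) • e i := by
    intro g i
    have h1 : (U g).symm (U g (e i)) = e i := (U g).symm_apply_apply _
    rw [hU, _root_.map_smul] at h1
    have h3 : (U g).symm (e i) = (χ i g)⁻¹ • e i := by
      have h4 := congrArg (fun v => (χ i g)⁻¹ • v) h1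
      simp only [smul_smul, inv_mul_cancel₀ (hχne i g), one_smul] at h4
      exact h4
    rw [h3]
    congr 1
    exact inv_eq_of_mul_eq_one_left (hconj _ (hχ_norm i g))
  -- the inner product with itself of basis vectors
  have hee : ∀ i : ι, ⟪e i, e i⟫ = 1 := by
    intro i
    rw [inner_self_eq_norm_sq_to_K]
    rw [e.orthonormal.1 i]
    norm_num
  -- diagonal matrix elements of a covariant POVM are given by Haar measure
  have hdiag : ∀ (F : POVM G 𝓗), F.Covariant U → ∀ (i : ι) (X : Set G), MeasurableSet X →
      ⟪e i, F.toFun X (e i)⟫ = (((μG X).toReal : ℝ) : ℂ) := by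
    intro F hF i X hX
    set m : Set G → ℝ := fun Y => (⟪e i, F.toFun Y (e i)⟫).re with hm
    have hreal : ∀ Y : Set G, MeasurableSet Y → ⟪e i, F.toFun Y (e i)⟫ = ((m Y : ℝ) : ℂ) := by
      intro Y hY
      have hsa : (starRingEnd ℂ) ⟪e i, F.toFun Y (e i)⟫ = ⟪e i, F.toFun Y (e i)⟫ := by
        rw [inner_conj_symm]
        exact (F.isPositive' Y hY).isSelfAdjoint.isSymmetric (e i) (e i)
      exact (Complex.conj_eq_iff_re.mp hsa).symm
    have hnn : ∀ Y, MeasurableSet Y → 0 ≤ m Y :=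
      fun Y hY => (F.isPositive' Y hY).re_inner_nonneg_right (e i)
    have h0 : m ∅ = 0 := by simp [hm, F.empty]
    have haddm : ∀ Y : ℕ → Set G, (∀ n, MeasurableSet (Y n)) →
        Pairwise (Function.onFun Disjoint Y) → HasSum (fun n => m (Y n)) (m (⋃ n, Y n)) := by
      intro Y hmeas hd
      exact Complex.reCLM.hasSum (F.m_iUnion' Y hmeas hd (e i) (e i))
    obtain ⟨ν, hν⟩ := build_measure m h0 hnn haddm
    haveI : IsProbabilityMeasure ν := by
      constructor
      rw [hν _ MeasurableSet.univ]
      have h1 : m Set.univ = 1 := by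
        simp only [hm, F.normalized']
        rw [ContinuousLinearMap.one_apply, hee i]
        simp
      rw [h1]; simp
    haveI : ν.IsMulLeftInvariant := by
      rw [← forall_measure_preimage_mul_iff]
      intro g A hA
      have hpre : (fun h => g * h) ⁻¹' A = g⁻¹ • A := by
        ext x
        simp [Set.mem_smul_set_iff_inv_smul_mem, smul_eq_mul]
      have hAm : MeasurableSet ((fun h => g * h) ⁻¹' A) := hA.preimage (measurable_const_mul g)
      rw [hν _ hAm, hν _ hA, hpre]
      congr 1
      have hc2 := hF g⁻¹ A hA (e i) (e i)
      rw [hUsymm g⁻¹ i] at hc2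
      show (⟪e i, F.toFun (g⁻¹ • A) (e i)⟫).re = (⟪e i, F.toFun A (e i)⟫).re
      rw [hc2, inner_smul_left]
      rw [_root_.map_smul, inner_smul_right, ← mul_assoc]
      have hone : (starRingEnd ℂ) ((starRingEnd ℂ) (χ i g⁻¹)) * (starRingEnd ℂ) (χ i g⁻¹) = 1 := by
        rw [Complex.conj_conj, mul_comm]
        exact hconj _ (hχ_norm i g⁻¹)
      rw [hone, one_mul]
    have huniq := Measure.isMulLeftInvariant_eq_smul ν μG
    have hscal : ν = μG := by
      have h1 : ν Set.univ = (Measure.haarScalarFactor ν μG • μG) Set.univ := by rw [← huniq]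
      rw [measure_univ, Measure.smul_apply, measure_univ] at h1
      have h3 : Measure.haarScalarFactor ν μG = 1 := by
        have h4 : (ν.haarScalarFactor μG : ℝ≥0∞) * 1 = 1 := by
          rw [← smul_eq_mul]
          exact_mod_cast h1.symm
        rw [mul_one] at h4
        exact_mod_cast h4
      rw [huniq, h3, one_smul]
    rw [hreal X hX]
    congr 1
    have := hν X hX
    rw [hscal] at this
    rw [← ENNReal.toReal_ofReal (hnn X hX), ← this]
  -- off-diagonal bound
  have hbound : ∀ (F : POVM G 𝓗), F.Covariant U → ∀ (i j : ι) (X : Set G), MeasurableSet X →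
      ‖⟪e j, F.toFun X (e i)⟫‖ ≤ (μG X).toReal := by
    intro F hF i j X hX
    have h1 := pos_cs (F.toFun X) (F.isPositive' X hX) (e j) (e i)
    rw [hdiag F hF i X hX, hdiag F hF j X hX] at h1
    simp only [Complex.ofReal_re] at h1
    nlinarith [norm_nonneg ⟪e j, F.toFun X (e i)⟫, ENNReal.toReal_nonneg (a := μG X)]
  -- density representation of off-diagonal matrix elements
  have hdens : ∀ (F : POVM G 𝓗), F.Covariant U → ∀ (i j : ι),
      ∃ ρ : G → ℂ, Integrable ρ μG ∧ (∀ᵐ x ∂μG, ‖ρ x‖ ≤ 1) ∧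
        ∀ X : Set G, MeasurableSet X → ⟪e j, F.toFun X (e i)⟫ = ∫ x in X, ρ x ∂μG := by
    intro F hF i j
    obtain ⟨fre, hfre_int, hfre⟩ := dens_real μG (fun Y => (⟪e j, F.toFun Y (e i)⟫).re)
      (by simp [F.empty])
      (by
        intro Y hY
        calc |(⟪e j, F.toFun Y (e i)⟫).re| ≤ ‖⟪e j, F.toFun Y (e i)⟫‖ := Complex.abs_re_le_norm _
          _ ≤ (μG Y).toReal := hbound F hF i j Y hY)
      (by
        intro Y hmeas hd
        exact Complex.reCLM.hasSum (F.m_iUnion' Y hmeas hd (e j) (e i)))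
    obtain ⟨fim, hfim_int, hfim⟩ := dens_real μG (fun Y => (⟪e j, F.toFun Y (e i)⟫).im)
      (by simp [F.empty])
      (by
        intro Y hY
        calc |(⟪e j, F.toFun Y (e i)⟫).im| ≤ ‖⟪e j, F.toFun Y (e i)⟫‖ := Complex.abs_im_le_norm _
          _ ≤ (μG Y).toReal := hbound F hF i j Y hY)
      (by
        intro Y hmeas hd
        exact Complex.imCLM.hasSum (F.m_iUnion' Y hmeas hd (e j) (e i)))
    set ρ : G → ℂ := fun x => ((fre x : ℝ) : ℂ) + ((fim x : ℝ) : ℂ) * Complex.I with hρ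
    have hρ_int : Integrable ρ μG := by
      apply Integrable.add
      · exact hfre_int.ofReal
      · have : (fun x => ((fim x : ℝ) : ℂ) * Complex.I) = fun x => fim x • (Complex.I : ℂ) := by
          funext x
          rw [Complex.real_smul]
        rw [this]
        exact hfim_int.smul_const Complex.I
    have hρ_set : ∀ X : Set G, MeasurableSet X → ⟪e j, F.toFun X (e i)⟫ = ∫ x in X, ρ x ∂μG := by
      intro X hX
      have h1 : ∫ x in X, ρ x ∂μG
          = (∫ x in X, ((fre x : ℝ) : ℂ) ∂μG) + ∫ x in X, ((fim x : ℝ) : ℂ) * Complex.I ∂μG := by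
        apply integral_add
        · exact hfre_int.ofReal.integrableOn
        · have : (fun x => ((fim x : ℝ) : ℂ) * Complex.I) = fun x => fim x • (Complex.I : ℂ) := by
            funext x; rw [Complex.real_smul]
          rw [this]
          exact (hfim_int.smul_const Complex.I).integrableOn
      have h2 : ∫ x in X, ((fre x : ℝ) : ℂ) ∂μG = ((∫ x in X, fre x ∂μG : ℝ) : ℂ) :=
        integral_ofReal
      have h3 : ∫ x in X, ((fim x : ℝ) : ℂ) * Complex.I ∂μG
          = ((∫ x in X, fim x ∂μG : ℝ) : ℂ) * Complex.I := by
        have h4 : (fun x => ((fim x : ℝ) : ℂ) * Complex.I) = fun x => fim x • (Complex.I : ℂ) := by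
          funext x; rw [Complex.real_smul]
        rw [h4, integral_smul_const, Complex.real_smul]
      rw [h1, h2, h3, ← hfre X hX, ← hfim X hX]
      exact (Complex.re_add_im _).symm
    refine ⟨ρ, hρ_int, ?_, hρ_set⟩
    -- a.e. bound via rational directions
    have hlam : ∀ lam : ℂ, ∀ᵐ x ∂μG, ((starRingEnd ℂ) lam * ρ x).re ≤ ‖lam‖ := by
      intro lam
      have hfint : Integrable (fun x => ((starRingEnd ℂ) lam * ρ x).re) μG := by
        exact (hρ_int.const_mul _).re
      have hgle : ∀ s : Set G, MeasurableSet s → μG s < ∞ →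
          (∫ x in s, ((starRingEnd ℂ) lam * ρ x).re ∂μG) ≤ ∫ _ in s, ‖lam‖ ∂μG := by
        intro s hs _
        have e1 : ∫ x in s, ((starRingEnd ℂ) lam * ρ x).re ∂μG
            = ((starRingEnd ℂ) lam * ∫ x in s, ρ x ∂μG).re := by
          rw [← integral_const_mul]
          exact (integral_re ((hρ_int.const_mul _).integrableOn)).symm ▸ rfl
        have e2 : ((starRingEnd ℂ) lam * ∫ x in s, ρ x ∂μG).re
            ≤ ‖lam‖ * (μG s).toReal := by
          calc ((starRingEnd ℂ) lam * ∫ x in s, ρ x ∂μG).re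
              ≤ ‖(starRingEnd ℂ) lam * ∫ x in s, ρ x ∂μG‖ := Complex.re_le_norm _
            _ = ‖lam‖ * ‖∫ x in s, ρ x ∂μG‖ := by rw [norm_mul, RCLike.norm_conj]
            _ ≤ ‖lam‖ * (μG s).toReal := by
                apply mul_le_mul_of_nonneg_left _ (norm_nonneg lam)
                rw [← hρ_set s hs]
                exact hbound F hF i j s hs
        have e3 : ∫ _ in s, ‖lam‖ ∂μG = (μG s).toReal * ‖lam‖ := by
          rw [setIntegral_const, smul_eq_mul]; rfl
        rw [e1, e3]
        exact e2.trans_eq (mul_comm _ _)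
      exact ae_le_of_forall_setIntegral_le hfint (integrable_const _) hgle
    have hall : ∀ᵐ x ∂μG, ∀ q r : ℚ,
        ((starRingEnd ℂ) ((q:ℂ) + (r:ℂ) * Complex.I) * ρ x).re ≤ ‖(q:ℂ) + (r:ℂ) * Complex.I‖ := by
      rw [ae_all_iff]
      intro q
      rw [ae_all_iff]
      intro r
      exact hlam _
    filter_upwards [hall] with x hx
    exact norm_le_one_of_rat (ρ x) hx
  -- final assembly
  have hs : (0:ℝ) < 1 - t := by linarith
  have main : ∀ (i j : ι) (X : Set G), MeasurableSet X →
      ⟪e j, E₁.toFun X (e i)⟫ = ⟪e j, E.toFun X (e i)⟫ ∧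
      ⟪e j, E₂.toFun X (e i)⟫ = ⟪e j, E.toFun X (e i)⟫ := by
    intro i j
    obtain ⟨ρ₁, hρ₁_int, hρ₁_le, hρ₁⟩ := hdens E₁ hcov1 i j
    obtain ⟨ρ₂, hρ₂_int, hρ₂_le, hρ₂⟩ := hdens E₂ hcov2 i j
    set u : G → ℂ := fun g => ((starRingEnd ℂ) (c j) * c i) * ((starRingEnd ℂ) (χ i g) * χ j g)
      with hu
    have hu_norm : ∀ g, ‖u g‖ = 1 := by
      intro g
      simp only [hu, norm_mul, RCLike.norm_conj, hχ_norm, hc]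
      norm_num
    have hu_cont : Continuous u :=
      continuous_const.mul ((Complex.continuous_conj.comp (hχ_cont i)).mul (hχ_cont j))
    have hu_int : Integrable u μG := by
      refine Integrable.mono' (integrable_const 1) hu_cont.aestronglyMeasurable ?_
      exact Filter.Eventually.of_forall fun g => le_of_eq (hu_norm g)
    have hEij : ∀ X : Set G, MeasurableSet X → ⟪e j, E.toFun X (e i)⟫ = ∫ x in X, u x ∂μG := by
      intro X hX
      rw [hE i j X hX]
      have hvvi : (⟪c j • vv, c i • vv⟫ : ℂ) = (starRingEnd ℂ) (c j) * c i := by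
        rw [inner_smul_left, inner_smul_right, inner_self_eq_norm_sq_to_K, hvv]
        push_cast; ring
      rw [hvvi, ← integral_const_mul]
    have hcomb : ∀ X : Set G, MeasurableSet X →
        ∫ x in X, ((t:ℂ) * ρ₁ x + ((1 - t : ℝ):ℂ) * ρ₂ x) ∂μG = ∫ x in X, u x ∂μG := by
      intro X hX
      have h1 : ∫ x in X, ((t:ℂ) * ρ₁ x + ((1 - t : ℝ):ℂ) * ρ₂ x) ∂μG
          = (t:ℂ) * ∫ x in X, ρ₁ x ∂μG + ((1 - t : ℝ):ℂ) * ∫ x in X, ρ₂ x ∂μG := by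
        rw [integral_add ((hρ₁_int.const_mul _).integrableOn) ((hρ₂_int.const_mul _).integrableOn),
          integral_const_mul, integral_const_mul]
      rw [h1, ← hρ₁ X hX, ← hρ₂ X hX, ← hEij X hX]
      have h3 := congrArg (fun A : 𝓗 →L[ℂ] 𝓗 => ⟪e j, A (e i)⟫) (hsum X)
      simp only [ContinuousLinearMap.add_apply, ContinuousLinearMap.coe_smul', Pi.smul_apply,
        inner_add_right, inner_smul_right] at h3
      exact h3.symm
    have hae : ∀ᵐ x ∂μG, ρ₁ x = u x ∧ ρ₂ x = u x := by
      have hcombint : Integrable (fun x => (t:ℂ) * ρ₁ x + ((1 - t : ℝ):ℂ) * ρ₂ x) μG :=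
        (hρ₁_int.const_mul _).add (hρ₂_int.const_mul _)
      have haeq : (fun x => (t:ℂ) * ρ₁ x + ((1 - t : ℝ):ℂ) * ρ₂ x) =ᵐ[μG] u :=
        ae_eq_of_forall_setIntegral_eq_of_sigmaFinite
          (fun s hs _ => hcombint.integrableOn)
          (fun s hs _ => hu_int.integrableOn)
          (fun s hs _ => hcomb s hs)
      filter_upwards [haeq, hρ₁_le, hρ₂_le] with x h1 h2 h3
      exact disc_extreme ht0 hs (by ring) h2 h3 (hu_norm x) h1
    have hae1 : ρ₁ =ᵐ[μG] u := hae.mono fun x h => h.1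
    have hae2 : ρ₂ =ᵐ[μG] u := hae.mono fun x h => h.2
    intro X hX
    constructor
    · rw [hρ₁ X hX, hEij X hX]
      exact integral_congr_ae (ae_restrict_of_ae hae1)
    · rw [hρ₂ X hX, hEij X hX]
      exact integral_congr_ae (ae_restrict_of_ae hae2)
  constructor
  · apply POVM.ext'
    intro X
    by_cases hX : MeasurableSet X
    · exact clm_ext_basis e (fun i j => (main i j X hX).1)
    · rw [E₁.not_measurable' X hX, E.not_measurable' X hX]
  · apply POVM.ext'
    intro X
    by_cases hX : MeasurableSet X
    · exact clm_ext_basis e (fun i j => (main i j X hX).2)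
    · rw [E₂.not_measurable' X hX, E.not_measurable' X hX]
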